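/- The expected number of random elements needed to generate the dihedral group of order 8 is e(D₈) = 10/3. -/
import Mathlib

/-- The probability that `k` uniformly random elements of `G` generate `G`. -/
noncomputable def genProb (G : Type*) [Group G] (k : ℕ) : ℝ :=
  (Nat.card {v : Fin k → G // Subgroup.closure (Set.range v) = ⊤} : ℝ) /
    (Nat.card G : ℝ) ^ k

/-- `egen G = ∑_{k ≥ 0} (1 - P_G(k))`, the expected number of random elements needed to
generate `G`. -/
noncomputable def egen (G : Type*) [Group G] : ℝ :=
  ∑' k : ℕ, (1 - genProb G k)

namespace EgenD8


open DihedralGroup Subgroup Fintype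

abbrev G8 := DihedralGroup 4

def s1 : Finset G8 := {r 0, r 1, r 2, r 3}
def s2 : Finset G8 := {r 0, r 2, sr 0, sr 2}
def s3 : Finset G8 := {r 0, r 2, sr 1, sr 3}
def t0 : Finset G8 := {r 0, r 2}

def M1 : Subgroup G8 where
  carrier := ↑s1
  mul_mem' := by decide
  one_mem' := by decide
  inv_mem' := by decide

def M2 : Subgroup G8 where
  carrier := ↑s2
  mul_mem' := by decide
  one_mem' := by decide
  inv_mem' := by decide

def M3 : Subgroup G8 where
  carrier := ↑s3
  mul_mem' := by decide
  one_mem' := by decide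
  inv_mem' := by decide

lemma keyA (H : Subgroup G8) (i j : ZMod 4) (hj : j = 1 ∨ j = 3)
    (hi : sr i ∈ H) (h1 : r j ∈ H) : H = ⊤ := by
  have h1 : (r 1 : G8) ∈ H := by
    rcases hj with rfl | rfl
    · exact h1
    · have : ((r 3 : G8)) ^ 3 = r 1 := by decide
      exact this ▸ pow_mem h1 3
  rw [eq_top_iff]
  rintro (⟨m⟩ | ⟨m⟩) -
  · have : (r 1 : G8) ^ m.val ∈ H := pow_mem h1 _
    simpa [r_one_pow, ZMod.natCast_val, ZMod.cast_id] using this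
  · have hr : (r (m - i) : G8) ∈ H := by
      have : (r 1 : G8) ^ (m - i).val ∈ H := pow_mem h1 _
      simpa [r_one_pow, ZMod.natCast_val, ZMod.cast_id] using this
    have := mul_mem hi hr
    simpa [sr_mul_r] using this

lemma key (H : Subgroup G8) (a b c : G8) (ha : a ∈ H) (hb : b ∈ H) (hc : c ∈ H)
    (h1 : a ∉ s1) (h2 : b ∉ s2) (h3 : c ∉ s3) : H = ⊤ := by
  obtain ⟨i⟩ | ⟨i⟩ := a
  · exact absurd ((by decide : ∀ i : ZMod 4, r i ∈ s1) i) h1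
  · -- a = sr i
    obtain ⟨j⟩ | ⟨j⟩ := b
    · -- b = r j, j ∈ {1,3}
      have hj : j = 1 ∨ j = 3 := (by decide : ∀ j : ZMod 4, r j ∉ s2 → j = 1 ∨ j = 3) j h2
      exact keyA H i j hj ha hb
    · -- b = sr j with j ∈ {1, 3}
      have hj : j = 1 ∨ j = 3 := (by decide : ∀ j : ZMod 4, sr j ∉ s2 → j = 1 ∨ j = 3) j h2
      obtain ⟨l⟩ | ⟨l⟩ := c
      · have hl : l = 1 ∨ l = 3 := (by decide : ∀ l : ZMod 4, r l ∉ s3 → l = 1 ∨ l = 3) l h3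
        exact keyA H i l hl ha hc
      · -- c = sr l with l ∈ {0, 2}
        have hl : l = 0 ∨ l = 2 := (by decide : ∀ l : ZMod 4, sr l ∉ s3 → l = 0 ∨ l = 2) l h3
        -- sr l * sr j = r (j - l), j - l odd
        have hd : (r (j - l) : G8) ∈ H := by
          have := mul_mem hc hb
          simpa [sr_mul_sr] using this
        have : j - l = 1 ∨ j - l = 3 := by
          rcases hj with rfl | rfl <;> rcases hl with rfl | rfl <;> decide
        exact keyA H i (j - l) this ha hd

lemma closure_top_iff {k : ℕ} (v : Fin k → G8) :
    Subgroup.closure (Set.range v) = ⊤ ↔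
      ¬(∀ i, v i ∈ s1) ∧ ¬(∀ i, v i ∈ s2) ∧ ¬(∀ i, v i ∈ s3) := by
  constructor
  · intro h
    refine ⟨fun hall => ?_, fun hall => ?_, fun hall => ?_⟩
    · have : Subgroup.closure (Set.range v) ≤ M1 := by
        rw [Subgroup.closure_le]; rintro x ⟨i, rfl⟩; exact hall i
      rw [h, top_le_iff] at this
      have h0 : (sr 0 : G8) ∈ M1 := this ▸ Subgroup.mem_top _
      have h0' : (sr 0 : G8) ∈ s1 := h0
      exact absurd h0' (by decide)
    · have : Subgroup.closure (Set.range v) ≤ M2 := by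
        rw [Subgroup.closure_le]; rintro x ⟨i, rfl⟩; exact hall i
      rw [h, top_le_iff] at this
      have h0 : (r 1 : G8) ∈ M2 := this ▸ Subgroup.mem_top _
      have h0' : (r 1 : G8) ∈ s2 := h0
      exact absurd h0' (by decide)
    · have : Subgroup.closure (Set.range v) ≤ M3 := by
        rw [Subgroup.closure_le]; rintro x ⟨i, rfl⟩; exact hall i
      rw [h, top_le_iff] at this
      have h0 : (r 1 : G8) ∈ M3 := this ▸ Subgroup.mem_top _
      have h0' : (r 1 : G8) ∈ s3 := h0
      exact absurd h0' (by decide)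
  · rintro ⟨h1, h2, h3⟩
    push_neg at h1 h2 h3
    obtain ⟨i1, hi1⟩ := h1
    obtain ⟨i2, hi2⟩ := h2
    obtain ⟨i3, hi3⟩ := h3
    exact key _ (v i1) (v i2) (v i3) (Subgroup.subset_closure ⟨i1, rfl⟩)
      (Subgroup.subset_closure ⟨i2, rfl⟩) (Subgroup.subset_closure ⟨i3, rfl⟩) hi1 hi2 hi3

lemma count (k : ℕ) :
    Nat.card {v : Fin k → G8 // Subgroup.closure (Set.range v) = ⊤} + 3 * 4 ^ k
      = 8 ^ k + 2 * 2 ^ k := by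
  classical
  have hcongr := Nat.card_congr (Equiv.subtypeEquivRight (fun v => closure_top_iff (k := k) v))
  rw [hcongr, Nat.card_eq_fintype_card, Fintype.card_subtype]
  set Q : (Fin k → G8) → Prop :=
    fun v => ¬(∀ i, v i ∈ s1) ∧ ¬(∀ i, v i ∈ s2) ∧ ¬(∀ i, v i ∈ s3) with hQ
  set A := Fintype.piFinset (fun _ : Fin k => s1) with hA
  set B := Fintype.piFinset (fun _ : Fin k => s2) with hB
  set C := Fintype.piFinset (fun _ : Fin k => s3) with hC
  set D := Fintype.piFinset (fun _ : Fin k => t0) with hD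
  have hfilter : Finset.univ.filter (fun v => ¬ Q v) = A ∪ B ∪ C := by
    ext v
    simp only [hQ, Finset.mem_filter, Finset.mem_univ, true_and, not_and_or, not_not,
      Finset.mem_union, hA, hB, hC, Fintype.mem_piFinset, or_assoc]
  have htot : (Finset.univ.filter Q).card + (A ∪ B ∪ C).card = 8 ^ k := by
    rw [← hfilter, Finset.card_filter_add_card_filter_not]
    simp only [Finset.card_univ, Fintype.card_fun, DihedralGroup.card]
    norm_num
  have hAB : A ∩ B = D := by
    ext v; simp [hA, hB, hD, Fintype.mem_piFinset, ← forall_and]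
    refine forall_congr' fun i => ?_
    have : ∀ x : G8, x ∈ s1 ∧ x ∈ s2 ↔ x ∈ t0 := by decide
    rw [← this]
  have hAC : A ∩ C = D := by
    ext v; simp [hA, hC, hD, Fintype.mem_piFinset, ← forall_and]
    refine forall_congr' fun i => ?_
    have : ∀ x : G8, x ∈ s1 ∧ x ∈ s3 ↔ x ∈ t0 := by decide
    rw [← this]
  have hBC : B ∩ C = D := by
    ext v; simp [hB, hC, hD, Fintype.mem_piFinset, ← forall_and]
    refine forall_congr' fun i => ?_
    have : ∀ x : G8, x ∈ s2 ∧ x ∈ s3 ↔ x ∈ t0 := by decide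
    rw [← this]
  have cardA : A.card = 4 ^ k := by simp [hA, Fintype.card_piFinset]; rfl
  have cardB : B.card = 4 ^ k := by simp [hB, Fintype.card_piFinset]; rfl
  have cardC : C.card = 4 ^ k := by simp [hC, Fintype.card_piFinset]; rfl
  have cardD : D.card = 2 ^ k := by simp [hD, Fintype.card_piFinset]; rfl
  -- inclusion–exclusion
  have e1 : (A ∪ B).card + (A ∩ B).card = A.card + B.card :=
    Finset.card_union_add_card_inter A B
  have e2 : (A ∪ B ∪ C).card + ((A ∪ B) ∩ C).card = (A ∪ B).card + C.card :=
    Finset.card_union_add_card_inter _ _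
  have e3 : ((A ∪ B) ∩ C) = D := by
    rw [Finset.union_inter_distrib_right, hAC, hBC, Finset.union_self]
  rw [e3, cardD, cardC] at e2
  rw [hAB, cardD, cardA, cardB] at e1
  show (Finset.univ.filter Q).card + 3 * 4 ^ k = 8 ^ k + 2 * 2 ^ k
  omega

lemma one_sub_genProb (k : ℕ) :
    1 - genProb (DihedralGroup 4) k = 3 * (1/2 : ℝ) ^ k - 2 * (1/4 : ℝ) ^ k := by
  have hN : (Nat.card {v : Fin k → G8 // Subgroup.closure (Set.range v) = ⊤} : ℝ)
      = 8 ^ k + 2 * 2 ^ k - 3 * 4 ^ k := by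
    have := count k
    have := congrArg (Nat.cast (R := ℝ)) this
    push_cast at this
    linarith
  have hG : (Nat.card (DihedralGroup 4) : ℝ) = 8 := by
    rw [DihedralGroup.nat_card]; norm_num
  rw [genProb, hN, hG]
  have h2 : (2:ℝ) ^ k ≠ 0 := by positivity
  have h4 : (4:ℝ) ^ k ≠ 0 := by positivity
  have h8 : (8:ℝ) ^ k = 2 ^ k * 4 ^ k := by rw [← mul_pow]; norm_num
  rw [h8, div_pow, div_pow]
  simp only [one_pow]
  field_simp
  ring
end EgenD8

open EgenD8 in
/-- `e(D₈) = 10/3`, where `D₈` is the dihedral group of order 8. -/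
theorem egen_dihedral_eight : egen (DihedralGroup 4) = 10 / 3 := by
  have s1 : Summable (fun k : ℕ => (1/2 : ℝ) ^ k) :=
    summable_geometric_of_lt_one (by norm_num) (by norm_num)
  have s2 : Summable (fun k : ℕ => (1/4 : ℝ) ^ k) :=
    summable_geometric_of_lt_one (by norm_num) (by norm_num)
  rw [egen]
  rw [tsum_congr one_sub_genProb]
  rw [Summable.tsum_sub (s1.mul_left 3) (s2.mul_left 2), tsum_mul_left, tsum_mul_left,
    tsum_geometric_of_lt_one (by norm_num) (by norm_num),
    tsum_geometric_of_lt_one (by norm_num) (by norm_num)]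
  norm_num
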